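/- arXiv:1802.06132 — 2 statements merged into one kernel-verified Lean document; each statement's English description precedes it below -/
import Mathlib

section
/- With J, S, R₁, R₂ as above, R₁R₁ᵀ = diag((I + (I-4η²CCᵀ)^{1/2})/2, (I + (I-4η²CᵀC)^{1/2})/2) and R₂R₂ᵀ = diag((I - (I-4η²CCᵀ)^{1/2})/2, (I - (I-4η²CᵀC)^{1/2})/2). -/
open Matrix
noncomputable section

/-- Largest eigenvalue (for symmetric matrices: sup of real spectrum). -/
def lamMax {n : Type*} [Fintype n] [DecidableEq n] (M : Matrix n n ℝ) : ℝ :=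
  sSup (spectrum ℝ M)

/-- Smallest eigenvalue (for symmetric matrices: inf of real spectrum). -/
def lamMin {n : Type*} [Fintype n] [DecidableEq n] (M : Matrix n n ℝ) : ℝ :=
  sInf (spectrum ℝ M)

/-- Operator (spectral) norm of a square real matrix. -/
def opNorm {n : Type*} [Fintype n] [DecidableEq n] (M : Matrix n n ℝ) : ℝ :=
  ‖toEuclideanCLM (𝕜 := ℝ) M‖

open Classical in
/-- Positive semidefinite square root (junk value `0` if `M` is not PSD). -/
def msqrt {n : Type*} [Fintype n] [DecidableEq n] (M : Matrix n n ℝ) : Matrix n n ℝ :=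
  if h : M.PosSemidef then
    (h.1.eigenvectorUnitary : Matrix n n ℝ) * diagonal (Real.sqrt ∘ h.1.eigenvalues) *
      (star h.1.eigenvectorUnitary : Matrix n n ℝ) else 0

/-- PSD square root (replacement for the removed Mathlib definition). -/
def Matrix.PosSemidef.sqrt {n : Type*} [Fintype n] [DecidableEq n] {M : Matrix n n ℝ}
    (h : M.PosSemidef) : Matrix n n ℝ :=
  (h.1.eigenvectorUnitary : Matrix n n ℝ) * diagonal (Real.sqrt ∘ h.1.eigenvalues) *
    (star h.1.eigenvectorUnitary : Matrix n n ℝ)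

lemma Matrix.PosSemidef.posSemidef_sqrt {n : Type*} [Fintype n] [DecidableEq n]
    {M : Matrix n n ℝ} (h : M.PosSemidef) : h.sqrt.PosSemidef := by
  unfold Matrix.PosSemidef.sqrt
  have hd : (diagonal (Real.sqrt ∘ h.1.eigenvalues)).PosSemidef :=
    Matrix.posSemidef_diagonal_iff.mpr fun i => Real.sqrt_nonneg _
  simpa [Matrix.star_eq_conjTranspose] using
    hd.mul_mul_conjTranspose_same (h.1.eigenvectorUnitary : Matrix n n ℝ)

lemma Matrix.PosSemidef.sqrt_mul_self {n : Type*} [Fintype n] [DecidableEq n]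
    {M : Matrix n n ℝ} (h : M.PosSemidef) : h.sqrt * h.sqrt = M := by
  have hU' : (star h.1.eigenvectorUnitary : Matrix n n ℝ) *
      (h.1.eigenvectorUnitary : Matrix n n ℝ) = 1 :=
    Matrix.mem_unitaryGroup_iff'.mp h.1.eigenvectorUnitary.2
  conv_rhs => rw [h.1.spectral_theorem, Unitary.conjStarAlgAut_apply]
  unfold Matrix.PosSemidef.sqrt
  rw [show ∀ a b c : Matrix n n ℝ, a * b * c * (a * b * c) = a * (b * (c * a) * b) * c from
    fun a b c => by simp only [mul_assoc], hU', mul_one, diagonal_mul_diagonal]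
  congr 2
  ext i j
  simp [diagonal_apply, Real.mul_self_sqrt, h.eigenvalues_nonneg]


open Polynomial

variable {n : Type*} [Fintype n] [DecidableEq n]

variable {n : Type*} [Fintype n] [DecidableEq n]

lemma myconj_pow (u d v : Matrix n n ℝ) (huv : u * v = 1) (hvu : v * u = 1) (k : ℕ) :
    (u * d * v) ^ k = u * d ^ k * v := by
  induction k with
  | zero => simp [huv]
  | succ k ih =>
      rw [pow_succ, ih, pow_succ]
      calc u * d ^ k * v * (u * d * v) = u * d ^ k * (v * u) * d * v := by
            simp only [mul_assoc]
        _ = u * (d ^ k * d) * v := by rw [hvu, mul_one]; simp only [mul_assoc]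

lemma conj_aeval (u d v : Matrix n n ℝ) (huv : u * v = 1) (hvu : v * u = 1) (q : ℝ[X]) :
    aeval (u * d * v) q = u * aeval d q * v := by
  rw [aeval_eq_sum_range, aeval_eq_sum_range, Finset.mul_sum, Finset.sum_mul]
  refine Finset.sum_congr rfl fun i _ => ?_
  rw [myconj_pow u d v huv hvu, mul_smul_comm, smul_mul_assoc]

lemma aeval_diagonal (d : n → ℝ) (q : ℝ[X]) :
    aeval (Matrix.diagonal d) q = Matrix.diagonal (fun i => q.eval (d i)) := by
  have h := aeval_algHom_apply (Matrix.diagonalAlgHom (n := n) (α := ℝ) ℝ) d q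
  rw [Matrix.diagonalAlgHom_apply] at h
  rw [h]
  have h2 : (aeval d q : n → ℝ) = fun i => q.eval (d i) := by
    funext i
    have h3 := aeval_algHom_apply (Pi.evalAlgHom ℝ (fun _ : n => ℝ) i) d q
    simpa [← Polynomial.coe_aeval_eq_eval] using h3.symm
  rw [h2, Matrix.diagonalAlgHom_apply]

lemma sqrt_eq_aeval {H : Matrix n n ℝ} (hH : H.PosSemidef) (q : ℝ[X])
    (hq : ∀ i, q.eval (hH.1.eigenvalues i) = Real.sqrt (hH.1.eigenvalues i)) :
    aeval H q = hH.sqrt := by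
  have hU : (hH.1.eigenvectorUnitary : Matrix n n ℝ) *
      (star hH.1.eigenvectorUnitary : Matrix n n ℝ) = 1 :=
    Matrix.mem_unitaryGroup_iff.mp hH.1.eigenvectorUnitary.2
  have hU' : (star hH.1.eigenvectorUnitary : Matrix n n ℝ) *
      (hH.1.eigenvectorUnitary : Matrix n n ℝ) = 1 :=
    Matrix.mem_unitaryGroup_iff'.mp hH.1.eigenvectorUnitary.2
  have e1 : (RCLike.ofReal ∘ hH.1.eigenvalues : n → ℝ) = hH.1.eigenvalues := by
    funext i; simp [RCLike.ofReal_real_eq_id]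
  have e2 : (Real.sqrt ∘ hH.1.eigenvalues : n → ℝ) =
      fun i => q.eval (hH.1.eigenvalues i) := by
    funext i; simp [RCLike.ofReal_real_eq_id, hq i]
  conv_lhs => rw [hH.1.spectral_theorem, Unitary.conjStarAlgAut_apply]
  rw [conj_aeval _ _ _ hU hU', Matrix.PosSemidef.sqrt, e1, e2, aeval_diagonal]

lemma intertwine_aeval {M N X : Matrix n n ℝ} (h : X * N = M * X) (q : ℝ[X]) :
    X * aeval N q = aeval M q * X := by
  have hsc : SemiconjBy X N M := h
  rw [aeval_eq_sum_range, aeval_eq_sum_range, Finset.mul_sum, Finset.sum_mul]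
  refine Finset.sum_congr rfl fun i _ => ?_
  rw [mul_smul_comm, smul_mul_assoc, (hsc.pow_right i).eq]

lemma psd_aux {N : Matrix n n ℝ} (hN : N.PosSemidef) (c : ℝ)
    (hb : ∀ μ ∈ spectrum ℝ N, c * μ ≤ 1) :
    (1 - c • N).PosSemidef := by
  have hU : (hN.1.eigenvectorUnitary : Matrix n n ℝ) *
      (star hN.1.eigenvectorUnitary : Matrix n n ℝ) = 1 :=
    Matrix.mem_unitaryGroup_iff.mp hN.1.eigenvectorUnitary.2
  have key : 1 - c • N = (hN.1.eigenvectorUnitary : Matrix n n ℝ) *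
      Matrix.diagonal (fun i => 1 - c * hN.1.eigenvalues i) *
      (star hN.1.eigenvectorUnitary : Matrix n n ℝ) := by
    have hd : Matrix.diagonal (fun i => 1 - c * hN.1.eigenvalues i) =
        1 - c • Matrix.diagonal (RCLike.ofReal ∘ hN.1.eigenvalues : n → ℝ) := by
      ext i j
      by_cases hij : i = j <;>
        simp [hij, Matrix.one_apply, Matrix.diagonal_apply, RCLike.ofReal_real_eq_id]
    conv_rhs => rw [hd, mul_sub, sub_mul, mul_one, hU, Matrix.mul_smul, Matrix.smul_mul,
      ← Unitary.conjStarAlgAut_apply (S := ℝ), ← hN.1.spectral_theorem]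
  rw [key]
  have hdiag : (Matrix.diagonal fun i => 1 - c * hN.1.eigenvalues i).PosSemidef := by
    refine Matrix.posSemidef_diagonal_iff.mpr fun i => ?_
    have := hb _ (hN.1.eigenvalues_mem_spectrum_real i)
    linarith
  have h2 := hdiag.mul_mul_conjTranspose_same (hN.1.eigenvectorUnitary : Matrix n n ℝ)
  simpa [Matrix.star_eq_conjTranspose] using h2

theorem stmt8 {p : ℕ} (C : Matrix (Fin p) (Fin p) ℝ) (η : ℝ) (hη : 0 < η)
    (h : 4 * η ^ 2 * lamMax (C * Cᵀ) ≤ 1)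
    (J S R₁ R₂ : Matrix (Fin p ⊕ Fin p) (Fin p ⊕ Fin p) ℝ)
    (hJ : J = fromBlocks 0 C (-Cᵀ) 0)
    (hS : S = fromBlocks (msqrt (1 - (4 * η ^ 2) • (C * Cᵀ))) 0 0
      (msqrt (1 - (4 * η ^ 2) • (Cᵀ * C))))
    (hR₁ : R₁ = (1 / 2 : ℝ) • ((1 - (2 * η) • J) + S))
    (hR₂ : R₂ = (1 / 2 : ℝ) • ((1 - (2 * η) • J) - S)) :
    R₁ * R₁ᵀ = fromBlocks ((1 / 2 : ℝ) • (1 + msqrt (1 - (4 * η ^ 2) • (C * Cᵀ)))) 0 0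
        ((1 / 2 : ℝ) • (1 + msqrt (1 - (4 * η ^ 2) • (Cᵀ * C)))) ∧
    R₂ * R₂ᵀ = fromBlocks ((1 / 2 : ℝ) • (1 - msqrt (1 - (4 * η ^ 2) • (C * Cᵀ)))) 0 0
        ((1 / 2 : ℝ) • (1 - msqrt (1 - (4 * η ^ 2) • (Cᵀ * C)))) := by
  classical
  have hc : (0:ℝ) ≤ 4 * η ^ 2 := by positivity
  -- positive semidefiniteness of the two base matrices
  have hN₁ : (C * Cᵀ).PosSemidef := by
    have := Matrix.posSemidef_self_mul_conjTranspose C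
    rwa [Matrix.conjTranspose_eq_transpose_of_trivial] at this
  have hN₂ : (Cᵀ * C).PosSemidef := by
    have := Matrix.posSemidef_conjTranspose_mul_self C
    rwa [Matrix.conjTranspose_eq_transpose_of_trivial] at this
  have hbdd : BddAbove (spectrum ℝ (C * Cᵀ)) := (Matrix.finite_spectrum _).bddAbove
  have hb₁ : ∀ μ ∈ spectrum ℝ (C * Cᵀ), (4 * η ^ 2) * μ ≤ 1 := by
    intro μ hμ
    have h1 : μ ≤ lamMax (C * Cᵀ) := le_csSup hbdd hμ
    have h2 : (4 * η ^ 2) * μ ≤ (4 * η ^ 2) * lamMax (C * Cᵀ) :=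
      mul_le_mul_of_nonneg_left h1 hc
    linarith
  have hb₂ : ∀ μ ∈ spectrum ℝ (Cᵀ * C), (4 * η ^ 2) * μ ≤ 1 := by
    intro μ hμ
    rcases eq_or_ne μ 0 with rfl | hμ0
    · simp
    · refine hb₁ μ ?_
      have := (spectrum.unit_mem_mul_comm
        (a := Cᵀ) (b := C) (r := Units.mk0 μ hμ0)).mp (by simpa using hμ)
      simpa using this
  have hM₁ : (1 - (4 * η ^ 2) • (C * Cᵀ)).PosSemidef := psd_aux hN₁ _ hb₁
  have hM₂ : (1 - (4 * η ^ 2) • (Cᵀ * C)).PosSemidef := psd_aux hN₂ _ hb₂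
  set A := hM₁.sqrt with hAdef
  set B := hM₂.sqrt with hBdef
  have hmsq₁ : msqrt (1 - (4 * η ^ 2) • (C * Cᵀ)) = A := by
    rw [msqrt, dif_pos hM₁]
    rfl
  have hmsq₂ : msqrt (1 - (4 * η ^ 2) • (Cᵀ * C)) = B := by
    rw [msqrt, dif_pos hM₂]
    rfl
  -- the intertwining relation A * C = C * B
  have hint : C * (1 - (4 * η ^ 2) • (Cᵀ * C)) = (1 - (4 * η ^ 2) • (C * Cᵀ)) * C := by
    rw [mul_sub, sub_mul, mul_one, one_mul, Matrix.mul_smul, Matrix.smul_mul, ← mul_assoc]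
  -- interpolation polynomial
  set s : Finset ℝ := (Finset.image hM₁.1.eigenvalues Finset.univ) ∪
      (Finset.image hM₂.1.eigenvalues Finset.univ) with hsdef
  set q : Polynomial ℝ := Lagrange.interpolate s id Real.sqrt with hqdef
  have hinj : Set.InjOn (id : ℝ → ℝ) s := Function.injective_id.injOn
  have hq : ∀ x ∈ s, q.eval x = Real.sqrt x := fun x hx =>
    Lagrange.eval_interpolate_at_node Real.sqrt hinj hx
  have hA : aeval (1 - (4 * η ^ 2) • (C * Cᵀ)) q = A :=
    sqrt_eq_aeval hM₁ q (fun i => hq _ (Finset.mem_union_left _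
      (Finset.mem_image_of_mem _ (Finset.mem_univ i))))
  have hB : aeval (1 - (4 * η ^ 2) • (Cᵀ * C)) q = B :=
    sqrt_eq_aeval hM₂ q (fun i => hq _ (Finset.mem_union_right _
      (Finset.mem_image_of_mem _ (Finset.mem_univ i))))
  have hCB : C * B = A * C := by
    rw [← hA, ← hB]; exact intertwine_aeval hint q
  -- symmetry facts
  have hAt : Aᵀ = A := by
    have h' : Aᴴ = A := hM₁.posSemidef_sqrt.1
    rwa [Matrix.conjTranspose_eq_transpose_of_trivial] at h'
  have hBt : Bᵀ = B := by
    have h' : Bᴴ = B := hM₂.posSemidef_sqrt.1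
    rwa [Matrix.conjTranspose_eq_transpose_of_trivial] at h'
  have hCtA : Cᵀ * A = B * Cᵀ := by
    have := congrArg Matrix.transpose hCB
    rw [Matrix.transpose_mul, Matrix.transpose_mul, hAt, hBt] at this
    exact this.symm
  have hAA : A * A = 1 - (4 * η ^ 2) • (C * Cᵀ) := hM₁.sqrt_mul_self
  have hBB : B * B = 1 - (4 * η ^ 2) • (Cᵀ * C) := hM₂.sqrt_mul_self
  have hS' : S = fromBlocks A 0 0 B := by rw [hS, hmsq₁, hmsq₂]
  -- block identities
  have hSt : Sᵀ = S := by
    rw [hS', Matrix.fromBlocks_transpose, hAt, hBt, Matrix.transpose_zero]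
  have hJt : Jᵀ = -J := by
    rw [hJ, Matrix.fromBlocks_transpose]
    simp [Matrix.fromBlocks_neg]
  have hSJ : S * J = J * S := by
    rw [hS', hJ, Matrix.fromBlocks_multiply, Matrix.fromBlocks_multiply]
    simp only [Matrix.mul_zero, Matrix.zero_mul, add_zero, zero_add, mul_zero, zero_mul,
      Matrix.mul_neg, Matrix.neg_mul]
    rw [hCB, hCtA]
  have hSS : S * S = 1 + (4 * η ^ 2) • (J * J) := by
    rw [hS', hJ, Matrix.fromBlocks_multiply, Matrix.fromBlocks_multiply,
      ← Matrix.fromBlocks_one]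
    simp only [Matrix.mul_zero, Matrix.zero_mul, add_zero, zero_add, Matrix.mul_neg,
      Matrix.neg_mul, Matrix.fromBlocks_smul, Matrix.fromBlocks_add]
    rw [hAA, hBB]
    congr 1 <;> simp [sub_eq_add_neg]
  -- transposes of R₁, R₂
  have hR₁t : R₁ᵀ = (1 / 2 : ℝ) • ((1 + (2 * η) • J) + S) := by
    rw [hR₁]
    simp [Matrix.transpose_smul, Matrix.transpose_add, Matrix.transpose_sub, hJt, hSt,
      sub_neg_eq_add]
  have hR₂t : R₂ᵀ = (1 / 2 : ℝ) • ((1 + (2 * η) • J) - S) := by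
    rw [hR₂]
    simp [Matrix.transpose_smul, Matrix.transpose_add, Matrix.transpose_sub, hJt, hSt,
      sub_neg_eq_add]
  -- the key algebraic computations
  have hmain₁ : ((1 - (2 * η) • J) + S) * ((1 + (2 * η) • J) + S) = (2:ℝ) • (1 + S) := by
    have expand : ((1 - (2 * η) • J) + S) * ((1 + (2 * η) • J) + S) =
        1 + (2 * η) • J + S - (2 * η) • J - (2 * η * (2 * η)) • (J * J) - (2 * η) • (J * S)
          + S + (2 * η) • (S * J) + S * S := by
      simp only [mul_add, add_mul, sub_mul, mul_sub, Matrix.smul_mul, Matrix.mul_smul,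
        smul_smul, one_mul, mul_one]
      abel
    rw [expand, hSJ, hSS]
    have h4 : (2 * η * (2 * η) : ℝ) = 4 * η ^ 2 := by ring
    rw [h4]
    module
  have hmain₂ : ((1 - (2 * η) • J) - S) * ((1 + (2 * η) • J) - S) = (2:ℝ) • (1 - S) := by
    have expand : ((1 - (2 * η) • J) - S) * ((1 + (2 * η) • J) - S) =
        1 + (2 * η) • J - S - (2 * η) • J - (2 * η * (2 * η)) • (J * J) + (2 * η) • (J * S)
          - S - (2 * η) • (S * J) + S * S := by
      simp only [mul_add, add_mul, sub_mul, mul_sub, Matrix.smul_mul, Matrix.mul_smul,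
        smul_smul, one_mul, mul_one]
      abel
    rw [expand, hSJ, hSS]
    have h4 : (2 * η * (2 * η) : ℝ) = 4 * η ^ 2 := by ring
    rw [h4]
    module
  constructor
  · rw [hR₁t, hR₁, Matrix.smul_mul, Matrix.mul_smul, smul_smul, hmain₁, smul_smul, hmsq₁, hmsq₂,
      hS', ← Matrix.fromBlocks_one, Matrix.fromBlocks_add, Matrix.fromBlocks_smul]
    norm_num [Matrix.fromBlocks_inj]
  · rw [hR₂t, hR₂, Matrix.smul_mul, Matrix.mul_smul, smul_smul, hmain₂, smul_smul, hmsq₁, hmsq₂,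
      hS']
    have : (1 : Matrix (Fin p ⊕ Fin p) (Fin p ⊕ Fin p) ℝ) - fromBlocks A 0 0 B =
        fromBlocks (1 - A) 0 0 (1 - B) := by
      rw [sub_eq_add_neg, ← Matrix.fromBlocks_one, Matrix.fromBlocks_neg,
        Matrix.fromBlocks_add]
      simp [sub_eq_add_neg]
    rw [this, Matrix.fromBlocks_smul]
    norm_num [Matrix.fromBlocks_inj]
end
end

section
/- Let C ∈ ℝ^{p×p} be full rank, η = 1/(2√(2λ_max(CCᵀ))), and consider the OMD dynamics θ_{t+1} = θ_t - 2ηCω_t + ηCω_{t-1}, ω_{t+1} = ω_t + 2ηCᵀθ_t - ηCᵀθ_{t-1}, with ‖(θ₀,ω₀)‖, ‖(θ₁,ω₁)‖ ≤ r. Then for all t ≥ 1, ‖(θ_t, ω_t)‖ ≤ 4√2·r·exp(-(t/16)·λ_min(CCᵀ)/λ_max(CCᵀ)). -/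
open Matrix
noncomputable section

private lemma sqrt_sum_sq_mono {p : ℕ} (f w : Fin p → ℝ) (h : ∀ i, |f i| ≤ w i) :
    Real.sqrt (∑ i, f i ^ 2) ≤ Real.sqrt (∑ i, w i ^ 2) := by
  apply Real.sqrt_le_sqrt
  apply Finset.sum_le_sum
  intro i _
  calc f i ^ 2 = |f i| ^ 2 := (sq_abs _).symm
    _ ≤ w i ^ 2 := by nlinarith [h i, abs_nonneg (f i)]

private lemma sqrt_sum_sq_add {p : ℕ} (g h : Fin p → ℝ) :
    Real.sqrt (∑ i, (g i + h i) ^ 2)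
      ≤ Real.sqrt (∑ i, g i ^ 2) + Real.sqrt (∑ i, h i ^ 2) := by
  set G := Real.sqrt (∑ i, g i ^ 2) with hG
  set H := Real.sqrt (∑ i, h i ^ 2) with hH
  have hG0 : 0 ≤ G := Real.sqrt_nonneg _
  have hH0 : 0 ≤ H := Real.sqrt_nonneg _
  have hG2 : G ^ 2 = ∑ i, g i ^ 2 := Real.sq_sqrt (by positivity)
  have hH2 : H ^ 2 = ∑ i, h i ^ 2 := Real.sq_sqrt (by positivity)
  have cs : ∑ i, g i * h i ≤ G * H := Real.sum_mul_le_sqrt_mul_sqrt _ _ _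
  have hexp : ∑ i, (g i + h i) ^ 2 = (∑ i, g i ^ 2) + 2 * (∑ i, g i * h i) + ∑ i, h i ^ 2 := by
    rw [Finset.mul_sum, ← Finset.sum_add_distrib, ← Finset.sum_add_distrib]
    exact Finset.sum_congr rfl fun i _ => by ring
  calc Real.sqrt (∑ i, (g i + h i) ^ 2) ≤ Real.sqrt ((G + H) ^ 2) := by
        apply Real.sqrt_le_sqrt; rw [hexp]; nlinarith
    _ = G + H := Real.sqrt_sq (by positivity)

private lemma sqrt_sum_sq_const_mul {p : ℕ} (c : ℝ) (hc : 0 ≤ c) (u : Fin p → ℝ) :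
    Real.sqrt (∑ i, (c * u i) ^ 2) = c * Real.sqrt (∑ i, u i ^ 2) := by
  have h : ∑ i, (c * u i) ^ 2 = c ^ 2 * ∑ i, u i ^ 2 := by
    rw [Finset.mul_sum]; exact Finset.sum_congr rfl fun i _ => by ring
  rw [h, Real.sqrt_mul (sq_nonneg c), Real.sqrt_sq hc]

private lemma sum_sq_mulVec {p : ℕ} (W : Matrix (Fin p) (Fin p) ℝ) (hW : Wᵀ * W = 1)
    (x : Fin p → ℝ) : ∑ i, (W *ᵥ x) i ^ 2 = ∑ i, x i ^ 2 := by
  have h1 : (W *ᵥ x) ⬝ᵥ (W *ᵥ x) = x ⬝ᵥ x := by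
    rw [dotProduct_mulVec]
    have h : W *ᵥ x = x ᵥ* Wᵀ := by rw [vecMul_transpose]
    rw [h, vecMul_vecMul, hW, vecMul_one]
  simpa [dotProduct, pow_two] using h1

private lemma closed_form (r₁ r₂ : ℂ) (ζ : ℕ → ℂ)
    (hrec : ∀ t, ζ (t + 2) = (r₁ + r₂) * ζ (t + 1) - r₁ * r₂ * ζ t) :
    ∀ t, (r₁ - r₂) * ζ t
      = r₁ ^ t * (ζ 1 - r₂ * ζ 0) - r₂ ^ t * (ζ 1 - r₁ * ζ 0) := by
  have key : ∀ t, ((r₁ - r₂) * ζ t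
        = r₁ ^ t * (ζ 1 - r₂ * ζ 0) - r₂ ^ t * (ζ 1 - r₁ * ζ 0)) ∧
      ((r₁ - r₂) * ζ (t + 1)
        = r₁ ^ (t + 1) * (ζ 1 - r₂ * ζ 0) - r₂ ^ (t + 1) * (ζ 1 - r₁ * ζ 0)) := by
    intro t
    induction t with
    | zero => constructor <;> ring
    | succ n ih =>
      refine ⟨ih.2, ?_⟩
      have h2 : ζ (n + 1 + 1) = (r₁ + r₂) * ζ (n + 1) - r₁ * r₂ * ζ n := hrec n
      rw [h2]
      linear_combination (r₁ + r₂) * ih.2 - r₁ * r₂ * ih.1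
  exact fun t => (key t).1

private lemma scalar_bound (α m : ℝ) (hm0 : 0 ≤ m) (hm : m ≤ α ^ 2) (h2 : 4 * α ^ 2 ≤ 1 / 2)
    (ζ : ℕ → ℂ)
    (hrec : ∀ t, ζ (t + 2) = (1 + 2 * (α : ℂ) * Complex.I) * ζ (t + 1)
      - (α : ℂ) * Complex.I * ζ t) (t : ℕ) :
    ‖ζ t‖ ≤ (Real.sqrt 2 * Real.sqrt (1 - m) ^ t + Real.sqrt 2 * (Real.sqrt 2)⁻¹ ^ t) *
      (‖ζ 1‖ + ‖ζ 0‖) := by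
  have hα2 : α ^ 2 ≤ 1 / 8 := by linarith
  have h4 : (0 : ℝ) ≤ 1 - 4 * α ^ 2 := by linarith
  set s := Real.sqrt (1 - 4 * α ^ 2) with hsdef
  have hs0 : 0 ≤ s := Real.sqrt_nonneg _
  have hs2 : s ^ 2 = 1 - 4 * α ^ 2 := Real.sq_sqrt h4
  have hs1 : s ≤ 1 - 2 * α ^ 2 := by
    have h := Real.sqrt_le_sqrt (show 1 - 4 * α ^ 2 ≤ (1 - 2 * α ^ 2) ^ 2 by nlinarith)
    rwa [Real.sqrt_sq (by linarith)] at h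
  have hslow : (Real.sqrt 2)⁻¹ ≤ s := by
    have h1 : Real.sqrt 2⁻¹ ≤ s := Real.sqrt_le_sqrt (by linarith)
    rwa [Real.sqrt_inv] at h1
  have hsqrt2pos : (0 : ℝ) < Real.sqrt 2 := by positivity
  have hspos : 0 < s := lt_of_lt_of_le (by positivity) hslow
  set r₁ : ℂ := ((1 + s) / 2 : ℝ) + (α : ℂ) * Complex.I with hr1def
  set r₂ : ℂ := ((1 - s) / 2 : ℝ) + (α : ℂ) * Complex.I with hr2def
  have hs2' : (s : ℂ) ^ 2 = 1 - 4 * (α : ℂ) ^ 2 := by exact_mod_cast congrArg Complex.ofReal hs2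
  have hsum : r₁ + r₂ = 1 + 2 * (α : ℂ) * Complex.I := by
    rw [hr1def, hr2def]; push_cast; ring
  have hprod : r₁ * r₂ = (α : ℂ) * Complex.I := by
    rw [hr1def, hr2def]; push_cast
    linear_combination (α : ℂ) ^ 2 * Complex.I_sq - hs2' / 4
  have hdiff : r₁ - r₂ = (s : ℂ) := by rw [hr1def, hr2def]; push_cast; ring
  have hnr1 : ‖r₁‖ ^ 2 = (1 + s) / 2 := by
    rw [hr1def]
    rw [show ‖((1 + s) / 2 : ℝ) + (α : ℂ) * Complex.I‖ ^ 2
        = Complex.normSq (((1 + s) / 2 : ℝ) + (α : ℂ) * Complex.I) from by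
      rw [Complex.sq_norm]]
    rw [Complex.normSq_add_mul_I]
    linear_combination hs2 / 4
  have hnr2 : ‖r₂‖ ^ 2 = (1 - s) / 2 := by
    rw [hr2def]
    rw [show ‖((1 - s) / 2 : ℝ) + (α : ℂ) * Complex.I‖ ^ 2
        = Complex.normSq (((1 - s) / 2 : ℝ) + (α : ℂ) * Complex.I) from by
      rw [Complex.sq_norm]]
    rw [Complex.normSq_add_mul_I]
    linear_combination hs2 / 4
  have habs_r1 : ‖r₁‖ ≤ Real.sqrt (1 - m) := by
    have h1 : ‖r₁‖ = Real.sqrt ((1 + s) / 2) := by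
      rw [← hnr1, Real.sqrt_sq (norm_nonneg _)]
    rw [h1]
    exact Real.sqrt_le_sqrt (by nlinarith)
  have habs_r2 : ‖r₂‖ ≤ (Real.sqrt 2)⁻¹ := by
    have h1 : ‖r₂‖ = Real.sqrt ((1 - s) / 2) := by
      rw [← hnr2, Real.sqrt_sq (norm_nonneg _)]
    rw [h1, ← Real.sqrt_inv]
    exact Real.sqrt_le_sqrt (by linarith)
  have hr1le1 : ‖r₁‖ ≤ 1 := habs_r1.trans (Real.sqrt_le_one.mpr (by linarith))
  have hr2le1 : ‖r₂‖ ≤ 1 := by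
    refine habs_r2.trans ?_
    rw [inv_le_one_iff₀]
    right
    rw [show (1:ℝ) = Real.sqrt 1 by rw [Real.sqrt_one]]
    exact Real.sqrt_le_sqrt (by norm_num)
  have hcf := closed_form r₁ r₂ ζ (fun u => by rw [hrec u, ← hsum, ← hprod]) t
  rw [hdiff] at hcf
  have hkey : s * ‖ζ t‖
      = ‖r₁ ^ t * (ζ 1 - r₂ * ζ 0) - r₂ ^ t * (ζ 1 - r₁ * ζ 0)‖ := by
    rw [← hcf, norm_mul, Complex.norm_real, Real.norm_eq_abs, abs_of_nonneg hs0]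
  have hA : ‖ζ 1 - r₂ * ζ 0‖ ≤ ‖ζ 1‖ + ‖ζ 0‖ := by
    calc ‖ζ 1 - r₂ * ζ 0‖ ≤ ‖ζ 1‖ + ‖r₂ * ζ 0‖ := norm_sub_le _ _
      _ = ‖ζ 1‖ + ‖r₂‖ * ‖ζ 0‖ := by rw [norm_mul]
      _ ≤ ‖ζ 1‖ + 1 * ‖ζ 0‖ := by gcongr
      _ = ‖ζ 1‖ + ‖ζ 0‖ := by ring
  have hB : ‖ζ 1 - r₁ * ζ 0‖ ≤ ‖ζ 1‖ + ‖ζ 0‖ := by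
    calc ‖ζ 1 - r₁ * ζ 0‖ ≤ ‖ζ 1‖ + ‖r₁ * ζ 0‖ := norm_sub_le _ _
      _ = ‖ζ 1‖ + ‖r₁‖ * ‖ζ 0‖ := by rw [norm_mul]
      _ ≤ ‖ζ 1‖ + 1 * ‖ζ 0‖ := by gcongr
      _ = ‖ζ 1‖ + ‖ζ 0‖ := by ring
  have hbig : s * ‖ζ t‖
      ≤ (Real.sqrt (1 - m) ^ t + (Real.sqrt 2)⁻¹ ^ t) * (‖ζ 1‖ + ‖ζ 0‖) := by
    rw [hkey]
    calc ‖r₁ ^ t * (ζ 1 - r₂ * ζ 0) - r₂ ^ t * (ζ 1 - r₁ * ζ 0)‖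
        ≤ ‖r₁ ^ t * (ζ 1 - r₂ * ζ 0)‖ + ‖r₂ ^ t * (ζ 1 - r₁ * ζ 0)‖ := norm_sub_le _ _
      _ = ‖r₁‖ ^ t * ‖ζ 1 - r₂ * ζ 0‖ + ‖r₂‖ ^ t * ‖ζ 1 - r₁ * ζ 0‖ := by
          rw [norm_mul, norm_mul, norm_pow, norm_pow]
      _ ≤ Real.sqrt (1 - m) ^ t * (‖ζ 1‖ + ‖ζ 0‖)
          + (Real.sqrt 2)⁻¹ ^ t * (‖ζ 1‖ + ‖ζ 0‖) := by
          gcongr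
      _ = _ := by ring
  have hsinv : s⁻¹ ≤ Real.sqrt 2 := by
    have h := inv_anti₀ (by positivity : (0:ℝ) < (Real.sqrt 2)⁻¹) hslow
    rwa [inv_inv] at h
  have hζ : ‖ζ t‖
      ≤ s⁻¹ * ((Real.sqrt (1 - m) ^ t + (Real.sqrt 2)⁻¹ ^ t) * (‖ζ 1‖ + ‖ζ 0‖)) := by
    rw [← mul_le_mul_iff_right₀ hspos, ← mul_assoc, mul_inv_cancel₀ hspos.ne', one_mul]
    exact hbig
  calc ‖ζ t‖ ≤ s⁻¹ * ((Real.sqrt (1 - m) ^ t + (Real.sqrt 2)⁻¹ ^ t) * (‖ζ 1‖ + ‖ζ 0‖)) := hζ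
    _ ≤ Real.sqrt 2 * ((Real.sqrt (1 - m) ^ t + (Real.sqrt 2)⁻¹ ^ t) * (‖ζ 1‖ + ‖ζ 0‖)) := by
        apply mul_le_mul_of_nonneg_right hsinv
        positivity
    _ = _ := by ring

theorem stmt11 {p : ℕ} (C : Matrix (Fin p) (Fin p) ℝ) (hC : C.rank = p) (η r : ℝ)
    (hη : η = 1 / (2 * Real.sqrt (2 * lamMax (C * Cᵀ))))
    (θ ω : ℕ → EuclideanSpace ℝ (Fin p))
    (hθ : ∀ t, θ (t + 2) = θ (t + 1) - (2 * η) • toEuclideanCLM (𝕜 := ℝ) C (ω (t + 1))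
      + η • toEuclideanCLM (𝕜 := ℝ) C (ω t))
    (hω : ∀ t, ω (t + 2) = ω (t + 1) + (2 * η) • toEuclideanCLM (𝕜 := ℝ) Cᵀ (θ (t + 1))
      - η • toEuclideanCLM (𝕜 := ℝ) Cᵀ (θ t))
    (h0 : Real.sqrt (‖θ 0‖ ^ 2 + ‖ω 0‖ ^ 2) ≤ r)
    (h1 : Real.sqrt (‖θ 1‖ ^ 2 + ‖ω 1‖ ^ 2) ≤ r) :
    ∀ t : ℕ, 1 ≤ t →
      Real.sqrt (‖θ t‖ ^ 2 + ‖ω t‖ ^ 2) ≤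
        4 * Real.sqrt 2 * r *
          Real.exp (-((t : ℝ) / 16) * (lamMin (C * Cᵀ) / lamMax (C * Cᵀ))) := by
  intro t _ht
  have hr0 : 0 ≤ r := le_trans (Real.sqrt_nonneg _) h0
  rcases Nat.eq_zero_or_pos p with hp | hp
  · subst hp
    have hz : ∀ u : EuclideanSpace ℝ (Fin 0), ‖u‖ = 0 := by
      intro u; rw [EuclideanSpace.norm_eq]; simp
    rw [hz (θ t), hz (ω t)]
    have hzz : Real.sqrt ((0:ℝ) ^ 2 + 0 ^ 2) = 0 := by norm_num
    rw [hzz]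
    positivity
  haveI : Nonempty (Fin p) := ⟨⟨0, hp⟩⟩
  -- invertibility
  have hCu : IsUnit C := by
    rw [← Matrix.mulVec_surjective_iff_isUnit]
    have hsurj : Function.Surjective C.mulVecLin := by
      rw [← LinearMap.range_eq_top]
      apply Submodule.eq_top_of_finrank_eq
      rw [show Module.finrank ℝ ↥(LinearMap.range C.mulVecLin) = C.rank from rfl, hC]
      simp [Module.finrank_pi]
    exact hsurj
  have hCdet : C.det ≠ 0 := ((Matrix.isUnit_iff_isUnit_det C).mp hCu).ne_zero
  have hH : (C * Cᵀ).IsHermitian := by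
    have h := Matrix.isHermitian_mul_conjTranspose_self C
    rwa [conjTranspose_eq_transpose_of_trivial] at h
  have hPSD : (C * Cᵀ).PosSemidef := by
    have h := Matrix.posSemidef_self_mul_conjTranspose C
    rwa [conjTranspose_eq_transpose_of_trivial] at h
  set d : Fin p → ℝ := hH.eigenvalues with hddef
  have hdpos : ∀ i, 0 < d i := by
    have hdet : (C * Cᵀ).det ≠ 0 := by
      rw [det_mul, det_transpose]; exact mul_ne_zero hCdet hCdet
    have hprod : (C * Cᵀ).det = ∏ i, d i := by
      simpa using hH.det_eq_prod_eigenvalues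
    intro i
    refine lt_of_le_of_ne (hPSD.eigenvalues_nonneg i) (Ne.symm ?_)
    intro h0'
    exact hdet (by rw [hprod]; exact Finset.prod_eq_zero (Finset.mem_univ i) h0')
  -- spectrum facts
  have hspec : spectrum ℝ (C * Cᵀ) = Set.range d := hH.spectrum_real_eq_range_eigenvalues
  have hne : (Set.range d).Nonempty := Set.range_nonempty d
  have hfin : (Set.range d).Finite := Set.finite_range d
  set lM := lamMax (C * Cᵀ) with hlMdef
  set lmI := lamMin (C * Cᵀ) with hlmIdef
  have hlamMax : lM = sSup (Set.range d) := by rw [hlMdef, lamMax, hspec]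
  have hlamMin : lmI = sInf (Set.range d) := by rw [hlmIdef, lamMin, hspec]
  have hled : ∀ i, d i ≤ lM := fun i => by
    rw [hlamMax]; exact le_csSup hfin.bddAbove ⟨i, rfl⟩
  have hged : ∀ i, lmI ≤ d i := fun i => by
    rw [hlamMin]; exact csInf_le hfin.bddBelow ⟨i, rfl⟩
  have hlMpos : 0 < lM := by
    obtain ⟨i, hi⟩ := hne.csSup_mem hfin
    rw [hlamMax, ← hi]; exact hdpos i
  have hlmIpos : 0 < lmI := by
    obtain ⟨i, hi⟩ := hne.csInf_mem hfin
    rw [hlamMin, ← hi]; exact hdpos i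
  obtain ⟨i0⟩ := (inferInstance : Nonempty (Fin p))
  have hmm : lmI ≤ lM := le_trans (hged i0) (hled i0)
  have hηpos : 0 < η := by
    rw [hη]
    have h := Real.sqrt_pos.mpr (by positivity : (0:ℝ) < 2 * lM)
    positivity
  have hη2 : η ^ 2 = 1 / (8 * lM) := by
    rw [hη, div_pow, one_pow, mul_pow, Real.sq_sqrt (by positivity : (0:ℝ) ≤ 2 * lM)]
    ring
  -- spectral theorem / SVD
  set U : Matrix (Fin p) (Fin p) ℝ := (hH.eigenvectorUnitary : Matrix (Fin p) (Fin p) ℝ) with hUdef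
  have hU2 : U * Uᵀ = 1 := by
    have h := (Matrix.mem_unitaryGroup_iff).mp (hH.eigenvectorUnitary).2
    rwa [star_eq_conjTranspose, conjTranspose_eq_transpose_of_trivial] at h
  have hU1 : Uᵀ * U = 1 := by
    have h := (Matrix.mem_unitaryGroup_iff').mp (hH.eigenvectorUnitary).2
    rwa [star_eq_conjTranspose, conjTranspose_eq_transpose_of_trivial] at h
  have hspecthm : Uᵀ * (C * Cᵀ) * U = Matrix.diagonal d := by
    have h := hH.conjStarAlgAut_star_eigenvectorUnitary
    rw [Unitary.conjStarAlgAut_apply, Unitary.coe_star, star_star, star_eq_conjTranspose, conjTranspose_eq_transpose_of_trivial] at h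
    simpa using h
  set σ : Fin p → ℝ := fun i => Real.sqrt (d i) with hσdef
  have hσpos : ∀ i, 0 < σ i := fun i => Real.sqrt_pos.mpr (hdpos i)
  have hσsq : ∀ i, σ i ^ 2 = d i := fun i => Real.sq_sqrt (hdpos i).le
  set Δ : Matrix (Fin p) (Fin p) ℝ := Matrix.diagonal σ with hΔdef
  set V : Matrix (Fin p) (Fin p) ℝ := Cᵀ * U * Matrix.diagonal (fun i => (σ i)⁻¹) with hVdef
  have hVt : Vᵀ = Matrix.diagonal (fun i => (σ i)⁻¹) * (Uᵀ * C) := by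
    rw [hVdef, transpose_mul, transpose_mul, diagonal_transpose, transpose_transpose]
  have hΔinv : Δ * Matrix.diagonal (fun i => (σ i)⁻¹) = 1 := by
    have h : (fun i => σ i * (σ i)⁻¹) = (fun _ : Fin p => (1:ℝ)) :=
      funext fun i => mul_inv_cancel₀ (hσpos i).ne'
    rw [hΔdef, diagonal_mul_diagonal, h, Matrix.diagonal_one]
  have hinvΔ : Matrix.diagonal (fun i => (σ i)⁻¹) * Δ = 1 := mul_eq_one_comm.mp hΔinv
  have hinvd : Matrix.diagonal (fun i => (σ i)⁻¹) * Matrix.diagonal d = Δ := by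
    have h : (fun i => (σ i)⁻¹ * d i) = σ := by
      funext i
      have hdi : d i = σ i * σ i := by rw [← pow_two]; exact (hσsq i).symm
      rw [hdi, ← mul_assoc, inv_mul_cancel₀ (hσpos i).ne', one_mul]
    rw [hΔdef, diagonal_mul_diagonal, h]
  have hUC : Uᵀ * C = Δ * Vᵀ := by
    rw [hVt, ← mul_assoc, hΔinv, one_mul]
  have hUCCt : Uᵀ * (C * Cᵀ) = Matrix.diagonal d * Uᵀ := by
    have h : Uᵀ * (C * Cᵀ) * U * Uᵀ = Matrix.diagonal d * Uᵀ := by rw [hspecthm]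
    rwa [mul_assoc (Uᵀ * (C * Cᵀ)) U Uᵀ, hU2, mul_one] at h
  have hVCt : Vᵀ * Cᵀ = Δ * Uᵀ := by
    rw [hVt, mul_assoc, mul_assoc Uᵀ C Cᵀ, hUCCt, ← mul_assoc, hinvd]
  have hVV : Vᵀ * V = 1 := by
    rw [hVt, hVdef]
    calc Matrix.diagonal (fun i => (σ i)⁻¹) * (Uᵀ * C) * (Cᵀ * U * Matrix.diagonal (fun i => (σ i)⁻¹))
        = Matrix.diagonal (fun i => (σ i)⁻¹) * (Uᵀ * (C * Cᵀ) * U) * Matrix.diagonal (fun i => (σ i)⁻¹) := by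
          simp only [mul_assoc]
      _ = Matrix.diagonal (fun i => (σ i)⁻¹) * Matrix.diagonal d * Matrix.diagonal (fun i => (σ i)⁻¹) := by
          rw [hspecthm]
      _ = Δ * Matrix.diagonal (fun i => (σ i)⁻¹) := by rw [hinvd]
      _ = 1 := hΔinv
  have hVVt : V * Vᵀ = 1 := mul_eq_one_comm.mp hVV
  -- sequences
  have hCLM : ∀ (A : Matrix (Fin p) (Fin p) ℝ) (x : EuclideanSpace ℝ (Fin p)) (i : Fin p),
      toEuclideanCLM (𝕜 := ℝ) A x i = (A *ᵥ (fun j => x j)) i := fun A x i =>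
    rfl
  set a : ℕ → Fin p → ℝ := fun u => Uᵀ *ᵥ (fun i => θ u i) with hadef
  set b : ℕ → Fin p → ℝ := fun u => Vᵀ *ᵥ (fun i => ω u i) with hbdef
  have hθfe : ∀ u, (fun i => θ (u + 2) i)
      = (fun i => θ (u + 1) i) - (2 * η) • (C *ᵥ (fun i => ω (u + 1) i))
        + η • (C *ᵥ (fun i => ω u i)) := by
    intro u
    funext i
    simp only [Pi.add_apply, Pi.sub_apply, Pi.smul_apply, smul_eq_mul]
    rw [hθ u]
    rw [PiLp.add_apply, PiLp.sub_apply, PiLp.smul_apply, PiLp.smul_apply, hCLM, hCLM]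
    simp [smul_eq_mul]
  have hωfe : ∀ u, (fun i => ω (u + 2) i)
      = (fun i => ω (u + 1) i) + (2 * η) • (Cᵀ *ᵥ (fun i => θ (u + 1) i))
        - η • (Cᵀ *ᵥ (fun i => θ u i)) := by
    intro u
    funext i
    simp only [Pi.add_apply, Pi.sub_apply, Pi.smul_apply, smul_eq_mul]
    rw [hω u]
    rw [PiLp.sub_apply, PiLp.add_apply, PiLp.smul_apply, PiLp.smul_apply, hCLM, hCLM]
    simp [smul_eq_mul]
  have harec : ∀ u, a (u + 2)
      = a (u + 1) - (2 * η) • (Δ *ᵥ b (u + 1)) + η • (Δ *ᵥ b u) := by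
    intro u
    show Uᵀ *ᵥ (fun i => θ (u + 2) i) = _
    rw [hθfe u, mulVec_add, mulVec_sub, mulVec_smul, mulVec_smul,
      mulVec_mulVec, mulVec_mulVec, hUC, ← mulVec_mulVec, ← mulVec_mulVec]
  have hbrec : ∀ u, b (u + 2)
      = b (u + 1) + (2 * η) • (Δ *ᵥ a (u + 1)) - η • (Δ *ᵥ a u) := by
    intro u
    show Vᵀ *ᵥ (fun i => ω (u + 2) i) = _
    rw [hωfe u, mulVec_sub, mulVec_add, mulVec_smul, mulVec_smul,
      mulVec_mulVec, mulVec_mulVec, hVCt, ← mulVec_mulVec, ← mulVec_mulVec]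
  set ζ : ℕ → Fin p → ℂ := fun u i => ((a u i : ℝ) : ℂ) + ((b u i : ℝ) : ℂ) * Complex.I
    with hζdef
  have hζrec : ∀ i u, ζ (u + 2) i
      = (1 + 2 * ((η * σ i : ℝ) : ℂ) * Complex.I) * ζ (u + 1) i
        - ((η * σ i : ℝ) : ℂ) * Complex.I * ζ u i := by
    intro i u
    have ha' : a (u + 2) i = a (u + 1) i - 2 * η * (σ i * b (u + 1) i)
        + η * (σ i * b u i) := by
      rw [harec u]
      simp only [Pi.add_apply, Pi.sub_apply, Pi.smul_apply, smul_eq_mul, hΔdef,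
        mulVec_diagonal]
    have hb' : b (u + 2) i = b (u + 1) i + 2 * η * (σ i * a (u + 1) i)
        - η * (σ i * a u i) := by
      rw [hbrec u]
      simp only [Pi.add_apply, Pi.sub_apply, Pi.smul_apply, smul_eq_mul, hΔdef,
        mulVec_diagonal]
    show ((a (u + 2) i : ℝ) : ℂ) + ((b (u + 2) i : ℝ) : ℂ) * Complex.I = _
    rw [ha', hb']
    simp only [hζdef]
    rw [Complex.ext_iff]
    simp only [Complex.add_re, Complex.add_im, Complex.mul_re, Complex.mul_im, Complex.sub_re,
      Complex.sub_im, Complex.I_re, Complex.I_im, Complex.ofReal_re, Complex.ofReal_im,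
      Complex.one_re, Complex.one_im, Complex.re_ofNat, Complex.im_ofNat]
    constructor <;> ring
  -- norm identities
  have hθn : ∀ u, ‖θ u‖ ^ 2 = ∑ i, (θ u i) ^ 2 := by
    intro u
    rw [EuclideanSpace.norm_eq, Real.sq_sqrt (by positivity)]
    exact Finset.sum_congr rfl fun i _ => by rw [Real.norm_eq_abs, sq_abs]
  have hωn : ∀ u, ‖ω u‖ ^ 2 = ∑ i, (ω u i) ^ 2 := by
    intro u
    rw [EuclideanSpace.norm_eq, Real.sq_sqrt (by positivity)]
    exact Finset.sum_congr rfl fun i _ => by rw [Real.norm_eq_abs, sq_abs]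
  have hζsum : ∀ u, ∑ i, ‖ζ u i‖ ^ 2 = ‖θ u‖ ^ 2 + ‖ω u‖ ^ 2 := by
    intro u
    have h1 : ∑ i, ‖ζ u i‖ ^ 2 = ∑ i, ((a u i) ^ 2 + (b u i) ^ 2) := by
      refine Finset.sum_congr rfl fun i _ => ?_
      show ‖((a u i : ℝ) : ℂ) + ((b u i : ℝ) : ℂ) * Complex.I‖ ^ 2 = _
      rw [Complex.sq_norm, Complex.normSq_add_mul_I]
    have ha2 : ∑ i, (a u i) ^ 2 = ∑ i, (θ u i) ^ 2 := by
      show ∑ i, (Uᵀ *ᵥ (fun j => θ u j)) i ^ 2 = _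
      rw [sum_sq_mulVec Uᵀ (by rw [transpose_transpose]; exact hU2) (fun j => θ u j)]
    have hb2 : ∑ i, (b u i) ^ 2 = ∑ i, (ω u i) ^ 2 := by
      show ∑ i, (Vᵀ *ᵥ (fun j => ω u j)) i ^ 2 = _
      rw [sum_sq_mulVec Vᵀ (by rw [transpose_transpose]; exact hVVt) (fun j => ω u j)]
    rw [h1, Finset.sum_add_distrib, ha2, hb2, hθn u, hωn u]
  -- scalar bounds
  set m : ℝ := lmI / (8 * lM) with hmdef
  have hm0 : 0 ≤ m := by positivity
  have hm18 : m ≤ 1 / 8 := by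
    rw [hmdef, div_le_iff₀ (by positivity)]
    nlinarith
  have hbound : ∀ i, ‖ζ t i‖
      ≤ (Real.sqrt 2 * Real.sqrt (1 - m) ^ t + Real.sqrt 2 * (Real.sqrt 2)⁻¹ ^ t) *
        (‖ζ 1 i‖ + ‖ζ 0 i‖) := by
    intro i
    have hα2 : (η * σ i) ^ 2 = d i / (8 * lM) := by
      rw [mul_pow, hη2, hσsq]; ring
    refine scalar_bound (η * σ i) m hm0 ?_ ?_ (fun u => ζ u i) (fun u => hζrec i u) t
    · rw [hα2, hmdef]
      gcongr
      exact hged i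
    · have h48 : (η * σ i) ^ 2 ≤ 1 / 8 := by
        rw [hα2, div_le_iff₀ (by positivity)]
        have := hled i
        linarith
      linarith
  -- exponential bounds
  have hratio1 : lmI / lM ≤ 1 := (div_le_one hlMpos).mpr hmm
  have hratio0 : 0 < lmI / lM := by positivity
  have hexpsq : Real.exp (-(lmI / lM) / 8) = Real.exp (-(lmI / lM) / 16) ^ 2 := by
    rw [← Real.exp_nat_mul]
    congr 1
    push_cast
    ring
  have hρle : Real.sqrt (1 - m) ≤ Real.exp (-(lmI / lM) / 16) := by
    have h1 : (1 : ℝ) - m ≤ Real.exp (-(lmI / lM) / 8) := by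
      have h := Real.add_one_le_exp (-(lmI / lM) / 8)
      have hm8 : m = (lmI / lM) / 8 := by rw [hmdef]; ring
      linarith
    calc Real.sqrt (1 - m) ≤ Real.sqrt (Real.exp (-(lmI / lM) / 8)) := Real.sqrt_le_sqrt h1
      _ = Real.exp (-(lmI / lM) / 16) := by
          rw [hexpsq, Real.sqrt_sq (Real.exp_pos _).le]
  have hτle : (Real.sqrt 2)⁻¹ ≤ Real.exp (-(lmI / lM) / 16) := by
    have h15 : (16 : ℝ) / 15 ≤ Real.sqrt 2 := by
      rw [show (16 : ℝ) / 15 = Real.sqrt (((16 : ℝ) / 15) ^ 2) from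
        (Real.sqrt_sq (by norm_num)).symm]
      exact Real.sqrt_le_sqrt (by norm_num)
    have hτ15 : (Real.sqrt 2)⁻¹ ≤ 15 / 16 := by
      have h := inv_anti₀ (by norm_num : (0:ℝ) < 16 / 15) h15
      rwa [show ((16:ℝ)/15)⁻¹ = 15/16 by norm_num] at h
    have hexp1 : (15 : ℝ) / 16 ≤ Real.exp (-(1:ℝ) / 16) := by
      have h := Real.add_one_le_exp (-(1:ℝ) / 16)
      linarith
    have hexp2 : Real.exp (-(1:ℝ) / 16) ≤ Real.exp (-(lmI / lM) / 16) := by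
      apply Real.exp_le_exp.mpr
      linarith
    linarith
  set E := Real.exp (-((t : ℝ) / 16) * (lmI / lM)) with hEdef
  have hE0 : 0 < E := Real.exp_pos _
  have hEeq : Real.exp (-(lmI / lM) / 16) ^ t = E := by
    rw [hEdef, ← Real.exp_nat_mul]
    congr 1
    ring
  have hρE : Real.sqrt (1 - m) ^ t ≤ E := by
    rw [← hEeq]
    exact pow_le_pow_left₀ (Real.sqrt_nonneg _) hρle t
  have hτE : (Real.sqrt 2)⁻¹ ^ t ≤ E := by
    rw [← hEeq]
    exact pow_le_pow_left₀ (by positivity) hτle t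
  -- assembly
  set c : ℝ := Real.sqrt 2 * Real.sqrt (1 - m) ^ t + Real.sqrt 2 * (Real.sqrt 2)⁻¹ ^ t
    with hcdef
  have hc0 : 0 ≤ c := by positivity
  have hz1 : Real.sqrt (∑ i, ‖ζ 1 i‖ ^ 2) ≤ r := by rw [hζsum 1]; exact h1
  have hz0 : Real.sqrt (∑ i, ‖ζ 0 i‖ ^ 2) ≤ r := by rw [hζsum 0]; exact h0
  have step1 : Real.sqrt (‖θ t‖ ^ 2 + ‖ω t‖ ^ 2)
      ≤ c * (Real.sqrt (∑ i, ‖ζ 1 i‖ ^ 2) + Real.sqrt (∑ i, ‖ζ 0 i‖ ^ 2)) := by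
    rw [← hζsum t]
    calc Real.sqrt (∑ i, ‖ζ t i‖ ^ 2)
        ≤ Real.sqrt (∑ i, (c * (‖ζ 1 i‖ + ‖ζ 0 i‖)) ^ 2) := by
          apply sqrt_sum_sq_mono
          intro i
          rw [abs_of_nonneg (norm_nonneg _)]
          exact hbound i
      _ = c * Real.sqrt (∑ i, (‖ζ 1 i‖ + ‖ζ 0 i‖) ^ 2) := sqrt_sum_sq_const_mul c hc0 _
      _ ≤ c * (Real.sqrt (∑ i, ‖ζ 1 i‖ ^ 2) + Real.sqrt (∑ i, ‖ζ 0 i‖ ^ 2)) :=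
          mul_le_mul_of_nonneg_left (sqrt_sum_sq_add _ _) hc0
  have hcE : c ≤ 2 * Real.sqrt 2 * E := by
    rw [hcdef]
    have hx := mul_le_mul_of_nonneg_left hρE (Real.sqrt_nonneg 2)
    have hy := mul_le_mul_of_nonneg_left hτE (Real.sqrt_nonneg 2)
    linarith
  calc Real.sqrt (‖θ t‖ ^ 2 + ‖ω t‖ ^ 2)
      ≤ c * (Real.sqrt (∑ i, ‖ζ 1 i‖ ^ 2) + Real.sqrt (∑ i, ‖ζ 0 i‖ ^ 2)) := step1
    _ ≤ c * (r + r) := by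
        apply mul_le_mul_of_nonneg_left (add_le_add hz1 hz0) hc0
    _ = 2 * c * r := by ring
    _ ≤ 2 * (2 * Real.sqrt 2 * E) * r := by
        have h := mul_le_mul_of_nonneg_right
          (mul_le_mul_of_nonneg_left hcE (by norm_num : (0:ℝ) ≤ 2)) hr0
        exact h
    _ = 4 * Real.sqrt 2 * r * E := by ring
end
end
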